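/- arXiv:2012.15309 — 3 statements merged into one kernel-verified Lean document; each statement's English description precedes it below -/
import Mathlib

section
/- For the pattern-rewriting system R = {21 → 12, 231 → 312}, the statistic Σ₁₂(π), the sum of all positions i with π(i+1) = π(i) + 1, is strictly increasing under each rewrite step; hence the rewrite relation →_R is terminating. -/
/-- One rewrite step of the pattern-rewriting system R = {21 → 12, 231 → 312}:
a consecutive factor b+1, b is replaced by b, b+1, or a consecutive factor
b+1, b+2, b is replaced by b+2, b, b+1. -/
def StepEQ1 (π π' : List ℕ) : Prop :=
  (∃ (l₁ l₂ : List ℕ) (b : ℕ),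
      π = l₁ ++ [b+1, b] ++ l₂ ∧ π' = l₁ ++ [b, b+1] ++ l₂) ∨
  (∃ (l₁ l₂ : List ℕ) (b : ℕ),
      π = l₁ ++ [b+1, b+2, b] ++ l₂ ∧ π' = l₁ ++ [b+2, b, b+1] ++ l₂)

/-- Σ₁₂(π): the sum of all (1-based) positions i with π(i+1) = π(i) + 1. -/
def Sigma12 (l : List ℕ) : ℕ :=
  ∑ i ∈ Finset.range l.length,
    if l.getD (i+1) 0 = l.getD i 0 + 1 then i + 1 else 0

lemma getD_left (l₁ m l₂ : List ℕ) (i : ℕ) (hi : i < l₁.length) :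
    (l₁ ++ m ++ l₂).getD i 0 = l₁.getD i 0 := by
  rw [List.append_assoc, List.getD_append _ _ _ _ hi]

lemma getD_mid (l₁ m l₂ : List ℕ) (j : ℕ) (hj : j < m.length) :
    (l₁ ++ m ++ l₂).getD (l₁.length + j) 0 = m.getD j 0 := by
  rw [List.append_assoc, List.getD_append_right _ _ _ _ (Nat.le_add_right _ _),
    Nat.add_sub_cancel_left, List.getD_append _ _ _ _ hj]

lemma getD_right (l₁ m l₂ : List ℕ) (j : ℕ) :
    (l₁ ++ m ++ l₂).getD (l₁.length + m.length + j) 0 = l₂.getD j 0 := by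
  rw [List.append_assoc, List.getD_append_right _ _ _ _ (by omega),
    List.getD_append_right _ _ _ _ (by omega)]
  congr 1
  omega

lemma mem_of_getD (l : List ℕ) (i v : ℕ) (hi : i < l.length) (h : l.getD i 0 = v) : v ∈ l := by
  rw [List.getD_eq_getElem _ _ hi] at h
  exact h ▸ List.getElem_mem hi

lemma mem_of_getD0 (l : List ℕ) (v : ℕ) (h : l.getD 0 0 = v + 1) : v + 1 ∈ l := by
  cases l with
  | nil => simp at h
  | cons x t => simp at h; simp [h]

-- specialized getD facts for 2-element middle
lemma g2_0 (l₁ l₂ : List ℕ) (a c : ℕ) :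
    (l₁ ++ [a, c] ++ l₂).getD l₁.length 0 = a := by
  have := getD_mid l₁ [a,c] l₂ 0 (by simp); simpa using this

lemma g2_1 (l₁ l₂ : List ℕ) (a c : ℕ) :
    (l₁ ++ [a, c] ++ l₂).getD (l₁.length + 1) 0 = c := by
  have := getD_mid l₁ [a,c] l₂ 1 (by simp); simpa using this

lemma g2_r (l₁ l₂ : List ℕ) (a c : ℕ) (j : ℕ) :
    (l₁ ++ [a, c] ++ l₂).getD (l₁.length + 2 + j) 0 = l₂.getD j 0 := by
  have := getD_right l₁ [a,c] l₂ j; simpa using this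

-- specialized getD facts for 3-element middle
lemma g3_0 (l₁ l₂ : List ℕ) (a c d : ℕ) :
    (l₁ ++ [a, c, d] ++ l₂).getD l₁.length 0 = a := by
  have := getD_mid l₁ [a,c,d] l₂ 0 (by simp); simpa using this

lemma g3_1 (l₁ l₂ : List ℕ) (a c d : ℕ) :
    (l₁ ++ [a, c, d] ++ l₂).getD (l₁.length + 1) 0 = c := by
  have := getD_mid l₁ [a,c,d] l₂ 1 (by simp); simpa using this

lemma g3_2 (l₁ l₂ : List ℕ) (a c d : ℕ) :
    (l₁ ++ [a, c, d] ++ l₂).getD (l₁.length + 2) 0 = d := by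
  have := getD_mid l₁ [a,c,d] l₂ 2 (by simp); simpa using this

lemma g3_r (l₁ l₂ : List ℕ) (a c d : ℕ) (j : ℕ) :
    (l₁ ++ [a, c, d] ++ l₂).getD (l₁.length + 3 + j) 0 = l₂.getD j 0 := by
  have := getD_right l₁ [a,c,d] l₂ j; simpa using this

lemma case1 (l₁ l₂ : List ℕ) (b : ℕ) (h : (l₁ ++ [b+1, b] ++ l₂).Nodup) :
    Sigma12 (l₁ ++ [b+1, b] ++ l₂) < Sigma12 (l₁ ++ [b, b+1] ++ l₂) := by
  have h' : (l₁ ++ ([b+1, b] ++ l₂)).Nodup := by rwa [List.append_assoc] at h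
  have d1 := List.disjoint_of_nodup_append h'
  have hbl₁ : b ∉ l₁ := fun hm => d1 hm (by simp)
  have d2 := List.disjoint_of_nodup_append h'.of_append_right
  have hb1l₂ : b + 1 ∉ l₂ := fun hm => d2 (by simp) hm
  set k := l₁.length with hk
  have hlen : (l₁ ++ [b+1, b] ++ l₂).length = k + 2 + l₂.length := by
    simp only [List.length_append, List.length_cons, List.length_nil]
    omega
  have hlen' : (l₁ ++ [b, b+1] ++ l₂).length = k + 2 + l₂.length := by
    simp only [List.length_append, List.length_cons, List.length_nil]
    omega
  unfold Sigma12
  rw [hlen, hlen']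
  apply Finset.sum_lt_sum
  · intro i hi
    rw [Finset.mem_range] at hi
    by_cases h1 : i + 1 < k
    · rw [getD_left l₁ _ l₂ i (by omega), getD_left l₁ _ l₂ (i+1) h1,
        getD_left l₁ _ l₂ i (by omega), getD_left l₁ _ l₂ (i+1) h1]
    · by_cases h2 : i + 1 = k
      · rw [h2, g2_0, getD_left l₁ _ l₂ i (by omega), if_neg]
        · exact Nat.zero_le _
        · intro heq
          exact hbl₁ (mem_of_getD l₁ i b (by omega) (by omega))
      · by_cases h3 : i = k
        · subst h3
          rw [show k + 1 = k + 1 from rfl, g2_1, g2_0, if_neg (by omega)]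
          exact Nat.zero_le _
        · by_cases h4 : i = k + 1
          · subst h4
            rw [show k + 1 + 1 = k + 2 from rfl,
              show k + 2 = k + 2 + 0 from rfl, g2_r, g2_1, if_neg]
            · exact Nat.zero_le _
            · intro heq
              exact hb1l₂ (mem_of_getD0 l₂ b heq)
          · -- i ≥ k + 2
            obtain ⟨j, rfl⟩ : ∃ j, i = k + 2 + j := ⟨i - (k+2), by omega⟩
            rw [g2_r, g2_r, show k + 2 + j + 1 = k + 2 + (j+1) from rfl, g2_r, g2_r]
  · refine ⟨k, Finset.mem_range.mpr (by omega), ?_⟩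
    rw [g2_0, g2_1, g2_0, g2_1, if_neg (by omega), if_pos rfl]
    omega

lemma case2 (l₁ l₂ : List ℕ) (b : ℕ) (h : (l₁ ++ [b+1, b+2, b] ++ l₂).Nodup) :
    Sigma12 (l₁ ++ [b+1, b+2, b] ++ l₂) < Sigma12 (l₁ ++ [b+2, b, b+1] ++ l₂) := by
  have h' : (l₁ ++ ([b+1, b+2, b] ++ l₂)).Nodup := by rwa [List.append_assoc] at h
  have d1 := List.disjoint_of_nodup_append h'
  have hbl₁ : b ∉ l₁ := fun hm => d1 hm (by simp)
  have hb1l₁ : b + 1 ∉ l₁ := fun hm => d1 hm (by simp)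
  have d2 := List.disjoint_of_nodup_append h'.of_append_right
  have hb1l₂ : b + 1 ∉ l₂ := fun hm => d2 (by simp) hm
  have hb2l₂ : b + 2 ∉ l₂ := fun hm => d2 (by simp) hm
  set k := l₁.length with hk
  have hlen : (l₁ ++ [b+1, b+2, b] ++ l₂).length = k + 3 + l₂.length := by
    simp only [List.length_append, List.length_cons, List.length_nil]
    omega
  have hlen' : (l₁ ++ [b+2, b, b+1] ++ l₂).length = k + 3 + l₂.length := by
    simp only [List.length_append, List.length_cons, List.length_nil]
    omega
  have key : ∑ i ∈ Finset.range (k + 3 + l₂.length),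
      ((if (l₁ ++ [b+1, b+2, b] ++ l₂).getD (i+1) 0 = (l₁ ++ [b+1, b+2, b] ++ l₂).getD i 0 + 1
          then i + 1 else 0) + (if i = k + 1 then k + 2 else 0))
      = ∑ i ∈ Finset.range (k + 3 + l₂.length),
      ((if (l₁ ++ [b+2, b, b+1] ++ l₂).getD (i+1) 0 = (l₁ ++ [b+2, b, b+1] ++ l₂).getD i 0 + 1
          then i + 1 else 0) + (if i = k then k + 1 else 0)) := by
    apply Finset.sum_congr rfl
    intro i hi
    rw [Finset.mem_range] at hi
    by_cases h1 : i + 1 < k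
    · rw [if_neg (show ¬(i = k + 1) by omega), if_neg (show ¬(i = k) by omega),
        getD_left l₁ _ l₂ i (by omega), getD_left l₁ _ l₂ (i+1) h1,
        getD_left l₁ _ l₂ i (by omega), getD_left l₁ _ l₂ (i+1) h1]
    · by_cases h2 : i + 1 = k
      · have e1 : (l₁ ++ [b+1, b+2, b] ++ l₂).getD (i+1) 0 = b + 1 := by rw [h2]; exact g3_0 _ _ _ _ _
        have e2 : (l₁ ++ [b+2, b, b+1] ++ l₂).getD (i+1) 0 = b + 2 := by rw [h2]; exact g3_0 _ _ _ _ _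
        rw [if_neg (show ¬(i = k + 1) by omega), if_neg (show ¬(i = k) by omega),
          e1, e2, getD_left l₁ _ l₂ i (by omega), getD_left l₁ _ l₂ i (by omega),
          if_neg (show ¬(b + 1 = l₁.getD i 0 + 1) from fun heq =>
            hbl₁ (mem_of_getD l₁ i b (by omega) (by omega))),
          if_neg (show ¬(b + 2 = l₁.getD i 0 + 1) from fun heq =>
            hb1l₁ (mem_of_getD l₁ i (b+1) (by omega) (by omega)))]
      · by_cases h3 : i = k
        · subst h3
          rw [if_neg (show ¬(k = k + 1) by omega), if_pos rfl,
            g3_1, g3_0, g3_1, g3_0, if_pos (show b + 2 = b + 1 + 1 from rfl),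
            if_neg (show ¬(b = b + 2 + 1) by omega)]
          omega
        · by_cases h4 : i = k + 1
          · subst h4
            rw [if_pos rfl, if_neg (show ¬(k + 1 = k) by omega),
              show k + 1 + 1 = k + 2 from rfl, g3_2, g3_1, g3_2, g3_1,
              if_neg (show ¬(b = b + 2 + 1) by omega),
              if_pos (show b + 1 = b + 1 from rfl)]
            omega
          · by_cases h5 : i = k + 2
            · subst h5
              rw [if_neg (show ¬(k + 2 = k + 1) by omega), if_neg (show ¬(k + 2 = k) by omega),
                show k + 2 + 1 = k + 3 + 0 from rfl, g3_r, g3_r, g3_2, g3_2,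
                if_neg (show ¬(l₂.getD 0 0 = b + 1) from fun heq =>
                  hb1l₂ (mem_of_getD0 l₂ b heq)),
                if_neg (show ¬(l₂.getD 0 0 = b + 1 + 1) from fun heq =>
                  hb2l₂ (mem_of_getD0 l₂ (b+1) heq))]
            · obtain ⟨j, rfl⟩ : ∃ j, i = k + 3 + j := ⟨i - (k+3), by omega⟩
              rw [if_neg (show ¬(k + 3 + j = k + 1) by omega),
                if_neg (show ¬(k + 3 + j = k) by omega),
                g3_r, g3_r, show k + 3 + j + 1 = k + 3 + (j+1) from rfl, g3_r, g3_r]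
  rw [Finset.sum_add_distrib, Finset.sum_add_distrib,
    Finset.sum_ite_eq' (Finset.range (k + 3 + l₂.length)) (k+1) (fun _ => k + 2),
    Finset.sum_ite_eq' (Finset.range (k + 3 + l₂.length)) k (fun _ => k + 1),
    if_pos (Finset.mem_range.mpr (by omega)), if_pos (Finset.mem_range.mpr (by omega))] at key
  unfold Sigma12
  rw [hlen, hlen']
  omega

lemma perm_of_step {π π' : List ℕ} (h : StepEQ1 π π') : π.Perm π' := by
  rcases h with ⟨l₁, l₂, b, rfl, rfl⟩ | ⟨l₁, l₂, b, rfl, rfl⟩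
  · exact ((List.Perm.swap b (b+1) []).append_left l₁).append_right l₂
  · exact (((List.Perm.swap (b+2) (b+1) [b]).trans
      ((List.Perm.swap b (b+1) []).cons (b+2))).append_left l₁).append_right l₂

lemma sigma_bound (l : List ℕ) : Sigma12 l ≤ l.length * l.length := by
  unfold Sigma12
  calc ∑ i ∈ Finset.range l.length,
        (if l.getD (i+1) 0 = l.getD i 0 + 1 then i + 1 else 0)
      ≤ ∑ _i ∈ Finset.range l.length, l.length := by
        apply Finset.sum_le_sum
        intro i hi
        rw [Finset.mem_range] at hi
        split <;> omega
    _ = l.length * l.length := by simp [Finset.sum_const, mul_comm]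


/-- For R = {21 → 12, 231 → 312}, Σ₁₂ strictly increases under each rewrite
step on permutations; hence the rewrite relation is terminating. -/
theorem stmt_10 :
    (∀ π π' : List ℕ, π.Nodup → StepEQ1 π π' → Sigma12 π < Sigma12 π') ∧
    (∀ f : ℕ → List ℕ, (f 0).Nodup → ¬ ∀ n, StepEQ1 (f n) (f (n+1))) := by
  have main : ∀ π π' : List ℕ, π.Nodup → StepEQ1 π π' → Sigma12 π < Sigma12 π' := by
    rintro π π' hnd (⟨l₁, l₂, b, rfl, rfl⟩ | ⟨l₁, l₂, b, rfl, rfl⟩)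
    · exact case1 l₁ l₂ b hnd
    · exact case2 l₁ l₂ b hnd
  refine ⟨main, ?_⟩
  intro f h0 hf
  have hperm : ∀ n, (f 0).Perm (f n) := by
    intro n
    induction n with
    | zero => exact List.Perm.refl _
    | succ n ih => exact ih.trans (perm_of_step (hf n))
  have hnd : ∀ n, (f n).Nodup := fun n => (hperm n).nodup h0
  have hmono : ∀ n, Sigma12 (f 0) + n ≤ Sigma12 (f n) := by
    intro n
    induction n with
    | zero => omega
    | succ n ih =>
      have := main (f n) (f (n+1)) (hnd n) (hf n)
      omega
  set N := (f 0).length * (f 0).length + 1 with hN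
  have h1 := hmono N
  have h2 := sigma_bound (f N)
  have h3 : (f N).length = (f 0).length := ((hperm N).length_eq).symm
  rw [h3] at h2
  omega
end

section
/- For the rewrite system R = {321 → 123, 2341 → 4123}, the statistic Σ₁₂₃(π), the sum of positions of occurrences of the Hertzsprung pattern 123 in π, strictly increases under each rewrite step, so →_R is terminating. -/
/-- One rewrite step of the pattern-rewriting system R = {321 → 123, 2341 → 4123}. -/
def StepEQ3 (π π' : List ℕ) : Prop :=
  (∃ (l₁ l₂ : List ℕ) (b : ℕ),
      π = l₁ ++ [b+2, b+1, b] ++ l₂ ∧ π' = l₁ ++ [b, b+1, b+2] ++ l₂) ∨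
  (∃ (l₁ l₂ : List ℕ) (b : ℕ),
      π = l₁ ++ [b+1, b+2, b+3, b] ++ l₂ ∧ π' = l₁ ++ [b+3, b, b+1, b+2] ++ l₂)

/-- Σ₁₂₃(π): the sum of all (1-based) positions i with π(i+1) = π(i) + 1 and
π(i+2) = π(i) + 2, i.e. positions of occurrences of the Hertzsprung
pattern 123. -/
def Sigma123 (l : List ℕ) : ℕ :=
  ∑ i ∈ Finset.range l.length,
    if l.getD (i+1) 0 = l.getD i 0 + 1 ∧ l.getD (i+2) 0 = l.getD i 0 + 2
    then i + 1 else 0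

def Trm (l : List ℕ) (i : ℕ) : ℕ :=
  if l.getD (i+1) 0 = l.getD i 0 + 1 ∧ l.getD (i+2) 0 = l.getD i 0 + 2 then i + 1 else 0

lemma sigma_eq (l : List ℕ) : Sigma123 l = ∑ i ∈ Finset.range l.length, Trm l i := rfl

lemma getD_mem₀ {l : List ℕ} {j : ℕ} (h : j < l.length) : l.getD j 0 ∈ l := by
  rw [List.getD_eq_getElem l 0 h]; exact List.getElem_mem h

lemma getD_ne {l : List ℕ} {x : ℕ} (hx : x ∉ l) (hx0 : x ≠ 0) (j : ℕ) : l.getD j 0 ≠ x := by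
  intro h
  rcases Nat.lt_or_ge j l.length with hj | hj
  · exact hx (h ▸ getD_mem₀ hj)
  · rw [List.getD_eq_default _ _ hj] at h; exact hx0 h.symm

lemma getD_at₁ {l₁ : List ℕ} (rest : List ℕ) {j : ℕ} (h : j < l₁.length) :
    (l₁ ++ rest).getD j 0 = l₁.getD j 0 := List.getD_append _ _ _ _ h

lemma getD_at₂ {l₁ : List ℕ} (rest : List ℕ) {j c : ℕ} (h : j = l₁.length + c) :
    (l₁ ++ rest).getD j 0 = rest.getD c 0 := by
  subst h
  rw [List.getD_append_right _ _ _ _ (by omega)]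
  congr 1
  omega

lemma nodup_facts {l₁ m l₂ : List ℕ} (h : (l₁ ++ m ++ l₂).Nodup) :
    ∀ x ∈ m, x ∉ l₁ ∧ x ∉ l₂ := by
  intro x hx
  rw [List.append_assoc, List.nodup_append] at h
  obtain ⟨h1, h2, h3⟩ := h
  rw [List.nodup_append] at h2
  exact ⟨fun hx1 => h3 x hx1 x (List.mem_append_left _ hx) rfl, fun hx2 => h2.2.2 x hx x hx2 rfl⟩

lemma Trm_congr {l₁ : List ℕ} (m m' l₂ : List ℕ) (hlen : m.length = m'.length) {i : ℕ}
    (h : i + 3 ≤ l₁.length ∨ l₁.length + m.length ≤ i) :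
    Trm (l₁ ++ m ++ l₂) i = Trm (l₁ ++ m' ++ l₂) i := by
  rcases h with h | h
  · unfold Trm
    rw [List.append_assoc, List.append_assoc,
      getD_at₁ _ (show i < l₁.length by omega), getD_at₁ _ (show i < l₁.length by omega),
      getD_at₁ _ (show i+1 < l₁.length by omega), getD_at₁ _ (show i+1 < l₁.length by omega),
      getD_at₁ _ (show i+2 < l₁.length by omega), getD_at₁ _ (show i+2 < l₁.length by omega)]
  · unfold Trm
    have e : ∀ j, l₁.length + m.length ≤ j →
        (l₁ ++ m ++ l₂).getD j 0 = l₂.getD (j - (l₁.length + m.length)) 0 := by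
      intro j hj
      rw [List.getD_append_right _ _ _ _ (by simp; omega)]
      simp
    have e' : ∀ j, l₁.length + m.length ≤ j →
        (l₁ ++ m' ++ l₂).getD j 0 = l₂.getD (j - (l₁.length + m.length)) 0 := by
      intro j hj
      rw [List.getD_append_right _ _ _ _ (by simp; omega)]
      simp [← hlen]
    rw [e i (by omega), e (i+1) (by omega), e (i+2) (by omega),
      e' i (by omega), e' (i+1) (by omega), e' (i+2) (by omega)]

lemma rule1 (l₁ l₂ : List ℕ) (b : ℕ) (hN : (l₁ ++ [b+2,b+1,b] ++ l₂).Nodup) :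
    Sigma123 (l₁ ++ [b+2,b+1,b] ++ l₂) < Sigma123 (l₁ ++ [b,b+1,b+2] ++ l₂) := by
  have hmem := nodup_facts hN
  have hb : b ∉ l₁ := (hmem b (by simp)).1
  have hb1 : (b+1) ∉ l₂ := (hmem (b+1) (by simp)).2
  have hρ : l₁ ++ [b+2,b+1,b] ++ l₂ = l₁ ++ ((b+2) :: (b+1) :: b :: l₂) := by simp
  have hρ' : l₁ ++ [b,b+1,b+2] ++ l₂ = l₁ ++ (b :: (b+1) :: (b+2) :: l₂) := by simp
  have z1 : ∀ i, l₁.length ≤ i + 2 → i < l₁.length + 3 →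
      Trm (l₁ ++ [b+2,b+1,b] ++ l₂) i = 0 := by
    intro i h1 h2
    rw [hρ]
    refine if_neg ?_
    rintro ⟨e1, e2⟩
    obtain ⟨c, hc5, hci⟩ : ∃ c, c < 5 ∧ i + 2 = l₁.length + c := ⟨i+2-l₁.length, by omega, by omega⟩
    interval_cases c
    · rw [getD_at₁ _ (by omega), getD_at₁ _ (by omega)] at e1
      rw [getD_at₂ _ (show i+2 = l₁.length + 0 by omega), getD_at₁ _ (by omega)] at e2
      simp only [List.getD_cons_zero] at e2
      exact hb ((show l₁.getD i 0 = b by omega) ▸ getD_mem₀ (show i < l₁.length by omega))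
    · rw [getD_at₂ _ (show i+1 = l₁.length + 0 by omega), getD_at₁ _ (by omega)] at e1
      rw [getD_at₂ _ (show i+2 = l₁.length + 1 by omega), getD_at₁ _ (by omega)] at e2
      simp only [List.getD_cons_zero, List.getD_cons_succ] at e1 e2
      omega
    · rw [getD_at₂ _ (show i+1 = l₁.length + 1 by omega),
        getD_at₂ _ (show i = l₁.length + 0 by omega)] at e1
      simp only [List.getD_cons_zero, List.getD_cons_succ] at e1
      omega
    · rw [getD_at₂ _ (show i+1 = l₁.length + 2 by omega),
        getD_at₂ _ (show i = l₁.length + 1 by omega)] at e1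
      simp only [List.getD_cons_zero, List.getD_cons_succ] at e1
      omega
    · rw [getD_at₂ _ (show i+1 = l₁.length + 3 by omega),
        getD_at₂ _ (show i = l₁.length + 2 by omega)] at e1
      simp only [List.getD_cons_zero, List.getD_cons_succ] at e1
      exact getD_ne hb1 (by omega) 0 e1
  have pos' : Trm (l₁ ++ [b,b+1,b+2] ++ l₂) l₁.length = l₁.length + 1 := by
    rw [hρ']
    refine if_pos ⟨?_, ?_⟩
    · rw [getD_at₂ _ (show l₁.length+1 = l₁.length + 1 by omega),
        getD_at₂ _ (show l₁.length = l₁.length + 0 by omega)]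
      simp [List.getD_cons_zero, List.getD_cons_succ]
    · rw [getD_at₂ _ (show l₁.length+2 = l₁.length + 2 by omega),
        getD_at₂ _ (show l₁.length = l₁.length + 0 by omega)]
      simp [List.getD_cons_zero, List.getD_cons_succ]
  rw [sigma_eq, sigma_eq]
  have hlen' : (l₁ ++ [b,b+1,b+2] ++ l₂).length = (l₁ ++ [b+2,b+1,b] ++ l₂).length := by simp
  rw [hlen']
  apply Finset.sum_lt_sum
  · intro i hi
    by_cases hz : i + 3 ≤ l₁.length ∨ l₁.length + 3 ≤ i
    · rw [Trm_congr [b+2,b+1,b] [b,b+1,b+2] l₂ rfl (by simpa using hz)]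
    · push_neg at hz
      rw [z1 i (by omega) (by omega)]
      exact Nat.zero_le _
  · refine ⟨l₁.length, ?_, ?_⟩
    · simp only [Finset.mem_range, List.length_append, List.length_cons]
      omega
    · rw [z1 _ (by omega) (by omega), pos']
      omega

lemma rule2 (l₁ l₂ : List ℕ) (b : ℕ) (hN : (l₁ ++ [b+1,b+2,b+3,b] ++ l₂).Nodup) :
    Sigma123 (l₁ ++ [b+1,b+2,b+3,b] ++ l₂) < Sigma123 (l₁ ++ [b+3,b,b+1,b+2] ++ l₂) := by
  have hmem := nodup_facts hN
  have hb : b ∉ l₁ := (hmem b (by simp)).1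
  have hb1l : (b+1) ∉ l₁ := (hmem (b+1) (by simp)).1
  have hb1 : (b+1) ∉ l₂ := (hmem (b+1) (by simp)).2
  have hb2l : (b+2) ∉ l₁ := (hmem (b+2) (by simp)).1
  have hb3 : (b+3) ∉ l₂ := (hmem (b+3) (by simp)).2
  have hρ : l₁ ++ [b+1,b+2,b+3,b] ++ l₂ = l₁ ++ ((b+1) :: (b+2) :: (b+3) :: b :: l₂) := by simp
  have hρ' : l₁ ++ [b+3,b,b+1,b+2] ++ l₂ = l₁ ++ ((b+3) :: b :: (b+1) :: (b+2) :: l₂) := by simp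
  have z2 : ∀ i, l₁.length ≤ i + 2 → i < l₁.length + 4 → i ≠ l₁.length →
      Trm (l₁ ++ [b+1,b+2,b+3,b] ++ l₂) i = 0 := by
    intro i h1 h2 h3
    rw [hρ]
    refine if_neg ?_
    rintro ⟨e1, e2⟩
    obtain ⟨c, hc6, hci⟩ : ∃ c, c < 6 ∧ i + 2 = l₁.length + c := ⟨i+2-l₁.length, by omega, by omega⟩
    interval_cases c
    · rw [getD_at₁ _ (by omega), getD_at₁ _ (by omega)] at e1
      rw [getD_at₂ _ (show i+2 = l₁.length + 0 by omega), getD_at₁ _ (by omega)] at e2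
      simp only [List.getD_cons_zero] at e2
      exact hb ((show l₁.getD (i+1) 0 = b by omega) ▸ getD_mem₀ (show i+1 < l₁.length by omega))
    · rw [getD_at₂ _ (show i+1 = l₁.length + 0 by omega), getD_at₁ _ (by omega)] at e1
      simp only [List.getD_cons_zero] at e1
      exact hb ((show l₁.getD i 0 = b by omega) ▸ getD_mem₀ (show i < l₁.length by omega))
    · omega
    · rw [getD_at₂ _ (show i+2 = l₁.length + 3 by omega),
        getD_at₂ _ (show i = l₁.length + 1 by omega)] at e2
      simp only [List.getD_cons_zero, List.getD_cons_succ] at e2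
      omega
    · rw [getD_at₂ _ (show i+1 = l₁.length + 3 by omega),
        getD_at₂ _ (show i = l₁.length + 2 by omega)] at e1
      simp only [List.getD_cons_zero, List.getD_cons_succ] at e1
      omega
    · rw [getD_at₂ _ (show i+1 = l₁.length + 4 by omega),
        getD_at₂ _ (show i = l₁.length + 3 by omega)] at e1
      simp only [List.getD_cons_zero, List.getD_cons_succ] at e1
      exact getD_ne hb1 (by omega) 0 e1
  have z2' : ∀ i, l₁.length ≤ i + 2 → i < l₁.length + 4 → i ≠ l₁.length + 1 →
      Trm (l₁ ++ [b+3,b,b+1,b+2] ++ l₂) i = 0 := by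
    intro i h1 h2 h3
    rw [hρ']
    refine if_neg ?_
    rintro ⟨e1, e2⟩
    obtain ⟨c, hc6, hci⟩ : ∃ c, c < 6 ∧ i + 2 = l₁.length + c := ⟨i+2-l₁.length, by omega, by omega⟩
    interval_cases c
    · rw [getD_at₁ _ (by omega), getD_at₁ _ (by omega)] at e1
      rw [getD_at₂ _ (show i+2 = l₁.length + 0 by omega), getD_at₁ _ (by omega)] at e2
      simp only [List.getD_cons_zero] at e2
      exact hb1l ((show l₁.getD i 0 = b+1 by omega) ▸ getD_mem₀ (show i < l₁.length by omega))
    · rw [getD_at₂ _ (show i+1 = l₁.length + 0 by omega), getD_at₁ _ (by omega)] at e1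
      rw [getD_at₂ _ (show i+2 = l₁.length + 1 by omega), getD_at₁ _ (by omega)] at e2
      simp only [List.getD_cons_zero, List.getD_cons_succ] at e1 e2
      omega
    · rw [getD_at₂ _ (show i+1 = l₁.length + 1 by omega),
        getD_at₂ _ (show i = l₁.length + 0 by omega)] at e1
      simp only [List.getD_cons_zero, List.getD_cons_succ] at e1
      omega
    · omega
    · rw [getD_at₂ _ (show i+2 = l₁.length + 4 by omega),
        getD_at₂ _ (show i = l₁.length + 2 by omega)] at e2
      simp only [List.getD_cons_zero, List.getD_cons_succ] at e2
      exact getD_ne hb3 (by omega) 0 e2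
    · rw [getD_at₂ _ (show i+1 = l₁.length + 4 by omega),
        getD_at₂ _ (show i = l₁.length + 3 by omega)] at e1
      simp only [List.getD_cons_zero, List.getD_cons_succ] at e1
      exact getD_ne hb3 (by omega) 0 e1
  have pos : Trm (l₁ ++ [b+1,b+2,b+3,b] ++ l₂) l₁.length = l₁.length + 1 := by
    rw [hρ]
    refine if_pos ⟨?_, ?_⟩
    · rw [getD_at₂ _ (show l₁.length+1 = l₁.length + 1 by omega),
        getD_at₂ _ (show l₁.length = l₁.length + 0 by omega)]
      simp [List.getD_cons_zero, List.getD_cons_succ]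
    · rw [getD_at₂ _ (show l₁.length+2 = l₁.length + 2 by omega),
        getD_at₂ _ (show l₁.length = l₁.length + 0 by omega)]
      simp [List.getD_cons_zero, List.getD_cons_succ]
  have pos' : Trm (l₁ ++ [b+3,b,b+1,b+2] ++ l₂) (l₁.length + 1) = l₁.length + 2 := by
    rw [hρ']
    refine if_pos ⟨?_, ?_⟩
    · rw [getD_at₂ _ (show l₁.length+1+1 = l₁.length + 2 by omega),
        getD_at₂ _ (show l₁.length+1 = l₁.length + 1 by omega)]
      simp [List.getD_cons_zero, List.getD_cons_succ]
    · rw [getD_at₂ _ (show l₁.length+1+2 = l₁.length + 3 by omega),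
        getD_at₂ _ (show l₁.length+1 = l₁.length + 1 by omega)]
      simp [List.getD_cons_zero, List.getD_cons_succ]
  rw [sigma_eq, sigma_eq]
  have hlen' : (l₁ ++ [b+3,b,b+1,b+2] ++ l₂).length = (l₁ ++ [b+1,b+2,b+3,b] ++ l₂).length := by
    simp
  rw [hlen']
  set n := (l₁ ++ [b+1,b+2,b+3,b] ++ l₂).length with hn
  have hk : l₁.length ∈ Finset.range n := by
    simp only [Finset.mem_range, hn, List.length_append, List.length_cons]
    omega
  have hk1 : l₁.length + 1 ∈ (Finset.range n).erase l₁.length := by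
    simp only [Finset.mem_erase, Finset.mem_range, hn, List.length_append, List.length_cons]
    omega
  rw [← Finset.add_sum_erase _ _ hk, ← Finset.add_sum_erase _ _ hk1,
    ← Finset.add_sum_erase _ (Trm (l₁ ++ [b+3,b,b+1,b+2] ++ l₂)) hk,
    ← Finset.add_sum_erase _ (Trm (l₁ ++ [b+3,b,b+1,b+2] ++ l₂)) hk1]
  have hS : ∑ i ∈ ((Finset.range n).erase l₁.length).erase (l₁.length + 1),
      Trm (l₁ ++ [b+1,b+2,b+3,b] ++ l₂) i =
      ∑ i ∈ ((Finset.range n).erase l₁.length).erase (l₁.length + 1),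
      Trm (l₁ ++ [b+3,b,b+1,b+2] ++ l₂) i := by
    refine Finset.sum_congr rfl ?_
    intro i hi
    simp only [Finset.mem_erase, Finset.mem_range] at hi
    obtain ⟨hik1, hik, _⟩ := hi
    by_cases hz : i + 3 ≤ l₁.length ∨ l₁.length + 4 ≤ i
    · exact Trm_congr [b+1,b+2,b+3,b] [b+3,b,b+1,b+2] l₂ rfl (by simpa using hz)
    · push_neg at hz
      rw [z2 i (by omega) (by omega) hik, z2' i (by omega) (by omega) hik1]
  rw [hS, pos, pos', z2 (l₁.length + 1) (by omega) (by omega) (by omega),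
    z2' l₁.length (by omega) (by omega) (by omega)]
  omega

lemma step_perm {π π' : List ℕ} (h : StepEQ3 π π') : π.Perm π' := by
  rcases h with ⟨l₁, l₂, b, rfl, rfl⟩ | ⟨l₁, l₂, b, rfl, rfl⟩ <;>
    refine List.Perm.append_right l₂ (List.Perm.append_left l₁ ?_) <;>
    · rw [List.perm_iff_count]
      intro x
      simp only [List.count_cons, List.count_nil]
      ring

/-- For R = {321 → 123, 2341 → 4123}, Σ₁₂₃ strictly increases under each
rewrite step on permutations; hence the rewrite relation is terminating. -/
theorem stmt_13 :
    (∀ π π' : List ℕ, π.Nodup → StepEQ3 π π' → Sigma123 π < Sigma123 π') ∧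
    (∀ f : ℕ → List ℕ, (f 0).Nodup → ¬ ∀ n, StepEQ3 (f n) (f (n+1))) := by
  have main : ∀ π π' : List ℕ, π.Nodup → StepEQ3 π π' → Sigma123 π < Sigma123 π' := by
    rintro π π' hN (⟨l₁, l₂, b, rfl, rfl⟩ | ⟨l₁, l₂, b, rfl, rfl⟩)
    · exact rule1 l₁ l₂ b hN
    · exact rule2 l₁ l₂ b hN
  refine ⟨main, ?_⟩
  intro f hf hstep
  have hnd : ∀ n, (f n).Nodup := by
    intro n
    induction n with
    | zero => exact hf
    | succ n ih => exact ((step_perm (hstep n)).nodup_iff).mp ih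
  have hlen : ∀ n, (f n).length = (f 0).length := by
    intro n
    induction n with
    | zero => rfl
    | succ n ih => rw [← (step_perm (hstep n)).length_eq, ih]
  have hmono : ∀ n, Sigma123 (f 0) + n ≤ Sigma123 (f n) := by
    intro n
    induction n with
    | zero => simp
    | succ n ih =>
      have := main (f n) (f (n+1)) (hnd n) (hstep n)
      omega
  have hbound : ∀ n, Sigma123 (f n) ≤ (f 0).length * (f 0).length := by
    intro n
    have h1 : Sigma123 (f n) ≤ ∑ _i ∈ Finset.range (f n).length, (f n).length := by
      apply Finset.sum_le_sum
      intro i hi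
      simp only [Finset.mem_range] at hi
      split <;> omega
    rw [Finset.sum_const, smul_eq_mul, Finset.card_range, hlen n] at h1
    exact h1
  have h1 := hmono ((f 0).length * (f 0).length + 1)
  have h2 := hbound ((f 0).length * (f 0).length + 1)
  omega
end

section
/- There is a bijection between S_n and pairs (σ, A) where σ is a 12-avoiding permutation (no i with σ(i+1) = σ(i)+1) of some length m ≤ n and A is a subset of {1,...,n} of size n - m compatible with the run decomposition; concretely, the map sending π to (the standardization of the sequence of first elements of its maximal consecutive-ascending runs, the set of all non-first elements of runs) is injective, and the number of occurrences of the Hertzsprung pattern 12 in π equals |A|. -/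
/-- The (1-based values of the) first elements of the maximal
consecutive-ascending runs of π, in position order: the entry at index j is
kept iff it does not continue the previous entry by +1. -/
def runFirsts (π : List ℕ) : List ℕ :=
  (List.range π.length).filterMap fun j =>
    if j = 0 ∨ π.getD j 0 ≠ π.getD (j-1) 0 + 1 then some (π.getD j 0) else none

/-- The non-first elements of the maximal consecutive-ascending runs of π:
entries that continue the previous entry by +1. -/
def runNonFirsts (π : List ℕ) : List ℕ :=
  (List.range π.length).filterMap fun j =>
    if j ≠ 0 ∧ π.getD j 0 = π.getD (j-1) 0 + 1 then some (π.getD j 0) else none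

/-- Standardization of a list of distinct naturals: the j-th smallest letter is
replaced by j. -/
def stdize (l : List ℕ) : List ℕ :=
  l.map fun x => (l.filter (fun y => y ≤ x)).length

/-- A list avoids the Hertzsprung pattern 12 if no entry is followed by its
successor. -/
def Avoids12 (l : List ℕ) : Prop :=
  ∀ i < l.length, l.getD (i+1) 0 ≠ l.getD i 0 + 1

/-- The number of occurrences of the Hertzsprung pattern 12 in π. -/
def occ12 (π : List ℕ) : ℕ :=
  ((List.range π.length).filter
    (fun i => π.getD (i+1) 0 = π.getD i 0 + 1)).length

namespace H18

def rfA (p : ℕ) : List ℕ → List ℕ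
  | [] => []
  | b :: l => if b = p + 1 then rfA b l else b :: rfA b l

def nfA (p : ℕ) : List ℕ → List ℕ
  | [] => []
  | b :: l => if b = p + 1 then b :: nfA b l else nfA b l

lemma rf_aux (l : List ℕ) : ∀ p : ℕ, ((List.range l.length).filterMap fun i =>
    if l.getD i 0 ≠ (if i = 0 then p else l.getD (i-1) 0) + 1 then some (l.getD i 0) else none)
    = rfA p l := by
  induction l with
  | nil => intro p; simp [rfA]
  | cons b t ih =>
    intro p
    rw [List.length_cons, List.range_succ_eq_map, List.filterMap_cons, List.filterMap_map]
    have h1 : ((fun i => if (b::t).getD i 0 ≠ (if i = 0 then p else (b::t).getD (i-1) 0) + 1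
          then some ((b::t).getD i 0) else none) ∘ Nat.succ)
        = (fun i => if t.getD i 0 ≠ (if i = 0 then b else t.getD (i-1) 0) + 1
          then some (t.getD i 0) else none) := by
      funext i; cases i <;> simp
    rw [h1, ih b]
    by_cases hb : b = p + 1 <;> simp [rfA, hb]

lemma nf_aux (l : List ℕ) : ∀ p : ℕ, ((List.range l.length).filterMap fun i =>
    if l.getD i 0 = (if i = 0 then p else l.getD (i-1) 0) + 1 then some (l.getD i 0) else none)
    = nfA p l := by
  induction l with
  | nil => intro p; simp [nfA]
  | cons b t ih =>
    intro p
    rw [List.length_cons, List.range_succ_eq_map, List.filterMap_cons, List.filterMap_map]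
    have h1 : ((fun i => if (b::t).getD i 0 = (if i = 0 then p else (b::t).getD (i-1) 0) + 1
          then some ((b::t).getD i 0) else none) ∘ Nat.succ)
        = (fun i => if t.getD i 0 = (if i = 0 then b else t.getD (i-1) 0) + 1
          then some (t.getD i 0) else none) := by
      funext i; cases i <;> simp
    rw [h1, ih b]
    by_cases hb : b = p + 1 <;> simp [nfA, hb]

lemma length_filterMap_ite {α β : Type} (C : α → Prop) [DecidablePred C] (f : α → β)
    (l : List α) :
    (l.filterMap fun i => if C i then some (f i) else none).length
      = (l.filter fun i => decide (C i)).length := by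
  induction l with
  | nil => simp
  | cons a t ih => by_cases h : C a <;> simp [h, ih]

lemma cnt_aux (l : List ℕ) (p : ℕ) : ((List.range l.length).filter fun i =>
    decide (l.getD i 0 = (if i = 0 then p else l.getD (i-1) 0) + 1)).length
    = (nfA p l).length := by
  rw [← nf_aux l p]
  exact (length_filterMap_ite _ _ _).symm

lemma runFirsts_nil : runFirsts [] = [] := rfl
lemma runNonFirsts_nil : runNonFirsts [] = [] := rfl
lemma occ12_nil : occ12 [] = 0 := rfl

lemma runFirsts_cons (a : ℕ) (l : List ℕ) : runFirsts (a :: l) = a :: rfA a l := by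
  unfold runFirsts
  rw [List.length_cons, List.range_succ_eq_map, List.filterMap_cons, List.filterMap_map]
  have h1 : ((fun j => if j = 0 ∨ (a::l).getD j 0 ≠ (a::l).getD (j-1) 0 + 1
        then some ((a::l).getD j 0) else none) ∘ Nat.succ)
      = (fun i => if l.getD i 0 ≠ (if i = 0 then a else l.getD (i-1) 0) + 1
        then some (l.getD i 0) else none) := by
    funext i; cases i <;> simp
  rw [h1, rf_aux l a]
  simp

lemma runNonFirsts_cons (a : ℕ) (l : List ℕ) : runNonFirsts (a :: l) = nfA a l := by
  unfold runNonFirsts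
  rw [List.length_cons, List.range_succ_eq_map, List.filterMap_cons, List.filterMap_map]
  have h1 : ((fun j => if j ≠ 0 ∧ (a::l).getD j 0 = (a::l).getD (j-1) 0 + 1
        then some ((a::l).getD j 0) else none) ∘ Nat.succ)
      = (fun i => if l.getD i 0 = (if i = 0 then a else l.getD (i-1) 0) + 1
        then some (l.getD i 0) else none) := by
    funext i; cases i <;> simp
  rw [h1, nf_aux l a]
  simp

lemma occ12_cons (a : ℕ) (l : List ℕ) : occ12 (a :: l) = (nfA a l).length := by
  unfold occ12
  rw [List.length_cons, List.range_succ, List.filter_append]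
  have hlast : (List.filter (fun i => decide ((a::l).getD (i+1) 0 = (a::l).getD i 0 + 1))
      [l.length]).length = 0 := by
    simp [List.getD_eq_default]
  rw [List.length_append, hlast, Nat.add_zero]
  have h2 : (fun i => decide ((a::l).getD (i+1) 0 = (a::l).getD i 0 + 1))
      = (fun i => decide (l.getD i 0 = (if i = 0 then a else l.getD (i-1) 0) + 1)) := by
    funext i; cases i <;> simp
  rw [h2, cnt_aux l a]

lemma rfA_cons (p b : ℕ) (t : List ℕ) :
    rfA p (b :: t) = if b = p + 1 then rfA b t else b :: rfA b t := rfl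

lemma nfA_cons (p b : ℕ) (t : List ℕ) :
    nfA p (b :: t) = if b = p + 1 then b :: nfA b t else nfA b t := rfl

lemma rfA_sublist (p : ℕ) (l : List ℕ) : (rfA p l).Sublist l := by
  induction l generalizing p with
  | nil => simp [rfA]
  | cons b t ih =>
    rw [rfA_cons]
    by_cases hb : b = p + 1
    · rw [if_pos hb]
      exact (ih b).trans (List.sublist_cons_self b t)
    · rw [if_neg hb]
      exact (ih b).cons₂ b

lemma nfA_sublist (p : ℕ) (l : List ℕ) : (nfA p l).Sublist l := by
  induction l generalizing p with
  | nil => simp [nfA]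
  | cons b t ih =>
    rw [nfA_cons]
    by_cases hb : b = p + 1
    · rw [if_pos hb]
      exact (ih b).cons₂ b
    · rw [if_neg hb]
      exact (ih b).trans (List.sublist_cons_self b t)

lemma rf_nf_perm (p : ℕ) (l : List ℕ) : (rfA p l ++ nfA p l).Perm l := by
  induction l generalizing p with
  | nil => simp [rfA, nfA]
  | cons b t ih =>
    rw [rfA_cons, nfA_cons]
    by_cases hb : b = p + 1
    · rw [if_pos hb, if_pos hb]
      exact (List.perm_middle).trans ((ih b).cons b)
    · rw [if_neg hb, if_neg hb, List.cons_append]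
      exact (ih b).cons b

/-- key membership lemma for injectivity -/
lemma nfA_mem_cases {p y : ℕ} {l : List ℕ} (h : y ∈ nfA p l) :
    (l.head? = some y ∧ y = p + 1) ∨ ∃ x ∈ l, y = x + 1 := by
  induction l generalizing p with
  | nil => simp [nfA] at h
  | cons b t ih =>
    rw [nfA_cons] at h
    by_cases hb : b = p + 1
    · rw [if_pos hb] at h
      rcases List.mem_cons.1 h with h | h
      · exact Or.inl ⟨by simp [h], by rw [h, hb]⟩
      · rcases ih h with ⟨_, h2⟩ | ⟨x, hx, h2⟩
        · exact Or.inr ⟨b, by simp, by rw [h2]⟩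
        · exact Or.inr ⟨x, by simp [hx], h2⟩
    · rw [if_neg hb] at h
      rcases ih h with ⟨_, h2⟩ | ⟨x, hx, h2⟩
      · exact Or.inr ⟨b, by simp, by rw [h2]⟩
      · exact Or.inr ⟨x, by simp [hx], h2⟩

/-- non-firsts come from adjacent pairs -/
lemma nfA_pairs {p y : ℕ} {l : List ℕ} (h : y ∈ nfA p l) :
    ∃ x, y = x + 1 ∧ (x, y) ∈ (p :: l).zip l := by
  induction l generalizing p with
  | nil => simp [nfA] at h
  | cons b t ih =>
    rw [nfA_cons] at h
    by_cases hb : b = p + 1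
    · rw [if_pos hb] at h
      rcases List.mem_cons.1 h with h | h
      · refine ⟨p, by rw [h, hb], ?_⟩
        rw [List.zip_cons_cons, h, hb]
        exact List.mem_cons_self
      · obtain ⟨x, h1, h2⟩ := ih h
        refine ⟨x, h1, ?_⟩
        rw [List.zip_cons_cons]
        exact List.mem_cons_of_mem _ h2
    · rw [if_neg hb] at h
      obtain ⟨x, h1, h2⟩ := ih h
      refine ⟨x, h1, ?_⟩
      rw [List.zip_cons_cons]
      exact List.mem_cons_of_mem _ h2

/-- functionality of the successor relation in a nodup list -/
lemma zip_tail_fun {L : List ℕ} (hnd : L.Nodup) {x y z : ℕ}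
    (h1 : (x, y) ∈ L.zip L.tail) (h2 : (x, z) ∈ L.zip L.tail) : y = z := by
  induction L with
  | nil => simp at h1
  | cons u T ih =>
    cases T with
    | nil => simp at h1
    | cons v T2 =>
      simp only [List.tail_cons, List.zip_cons_cons, List.mem_cons, Prod.mk.injEq] at h1 h2
      rcases h1 with ⟨hx1, hy1⟩ | h1 <;> rcases h2 with ⟨hx2, hy2⟩ | h2
      · rw [hy1, hy2]
      · exfalso
        have hx : x ∈ v :: T2 := (List.of_mem_zip h2).1
        rw [hx1] at hx
        exact (List.nodup_cons.1 hnd).1 hx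
      · exfalso
        have hx : x ∈ v :: T2 := (List.of_mem_zip h1).1
        rw [hx2] at hx
        exact (List.nodup_cons.1 hnd).1 hx
      · exact ih (List.nodup_cons.1 hnd).2 (by simpa using h1) (by simpa using h2)

/-- the main chain lemma: consecutive run-firsts are never adjacent in value order -/
lemma chain_lemma (Q : ℕ → Prop) (adj : List (ℕ × ℕ)) (n : ℕ)
    (Hkey : ∀ e b : ℕ, (e, b) ∈ adj → e + 1 ≤ n → e + 1 ≠ b → Q (e + 1)) :
    ∀ (l : List ℕ) (f e : ℕ),
    (∀ pr ∈ (e :: l).zip l, pr ∈ adj) →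
    (∀ x ∈ l, x ≤ n) →
    f ≤ e →
    l.Nodup →
    (∀ v, f ≤ v → v ≤ e → v ∉ l) →
    List.Chain' (fun u v => u < v → ∃ y, Q y ∧ u < y ∧ y < v) (f :: rfA e l) := by
  intro l
  induction l with
  | nil => intro f e _ _ _ _ _; simp [rfA]; exact List.isChain_singleton f
  | cons b t ih =>
    intro f e Hadj Hbnd Hfe Hnd Hnotin
    have Hndt : t.Nodup := (List.nodup_cons.1 Hnd).2
    have Hbt : b ∉ t := (List.nodup_cons.1 Hnd).1
    have Hadj' : ∀ pr ∈ (b :: t).zip t, pr ∈ adj := by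
      intro pr hpr
      apply Hadj
      rw [List.zip_cons_cons]
      exact List.mem_cons_of_mem _ hpr
    have Hbnd' : ∀ x ∈ t, x ≤ n := fun x hx => Hbnd x (List.mem_cons_of_mem _ hx)
    rw [rfA_cons]
    by_cases hb : b = e + 1
    · rw [if_pos hb]
      apply ih f b Hadj' Hbnd' (by omega) Hndt
      intro v hv1 hv2 hvt
      by_cases hve : v ≤ e
      · exact Hnotin v hv1 hve (List.mem_cons_of_mem _ hvt)
      · have : v = b := by omega
        rw [this] at hvt; exact Hbt hvt
    · rw [if_neg hb]
      have hch : List.Chain' (fun u v => u < v → ∃ y, Q y ∧ u < y ∧ y < v) (b :: rfA b t) := by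
        apply ih b b Hadj' Hbnd' le_rfl Hndt
        intro v hv1 hv2 hvt
        have : v = b := le_antisymm hv2 hv1
        rw [this] at hvt; exact Hbt hvt
      refine List.IsChain.cons_cons ?_ hch
      intro hfb
      have hbl : b ∈ b :: t := List.mem_cons_self
      have hbe : ¬ (b ≤ e) := fun hle => Hnotin b (le_of_lt hfb) hle hbl
      have heb : e + 1 < b := by omega
      have hbn : b ≤ n := Hbnd b hbl
      have hpair : (e, b) ∈ adj := by
        apply Hadj
        rw [List.zip_cons_cons]
        exact List.mem_cons_self
      exact ⟨e + 1, Hkey e b hpair (by omega) (by omega), by omega, heb⟩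

def rk (F : List ℕ) (x : ℕ) : ℕ := (F.filter (fun y => y ≤ x)).length

lemma stdize_eq_map_rk (l : List ℕ) : stdize l = l.map (rk l) := rfl

lemma rk_mono (F : List ℕ) {x y : ℕ} (h : x ≤ y) : rk F x ≤ rk F y := by
  unfold rk
  rw [← List.countP_eq_length_filter, ← List.countP_eq_length_filter]
  apply List.countP_mono_left
  intro a _ ha
  simp only [decide_eq_true_eq] at *
  omega

lemma rk_lt (F : List ℕ) {x y : ℕ} (h : x < y) (hy : y ∈ F) : rk F x < rk F y := by
  have hp := List.perm_cons_erase hy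
  unfold rk
  rw [← List.countP_eq_length_filter, ← List.countP_eq_length_filter,
      hp.countP_eq, hp.countP_eq, List.countP_cons, List.countP_cons]
  have h1 : decide (y ≤ x) = false := by simp; omega
  have h2 : decide (y ≤ y) = true := by simp
  rw [h1, h2]
  have : List.countP (fun z => decide (z ≤ x)) (F.erase y)
      ≤ List.countP (fun z => decide (z ≤ y)) (F.erase y) := by
    apply List.countP_mono_left
    intro a _ ha
    simp only [decide_eq_true_eq] at *
    omega
  simp only [Bool.false_eq_true, ite_false, ite_true]
  omega

lemma avoids_of_chain (F : List ℕ)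
    (h : List.Chain' (fun u v => u < v → ∃ y, y ∈ F ∧ u < y ∧ y < v) F) :
    Avoids12 (stdize F) := by
  intro i hi
  have hlen : (stdize F).length = F.length := by
    rw [stdize_eq_map_rk, List.length_map]
  by_cases h2 : i + 1 < F.length
  · have e1 : (stdize F).getD (i+1) 0 = rk F (F[i+1]'h2) := by
      rw [List.getD_eq_getElem _ _ (by omega : i + 1 < (stdize F).length)]
      simp only [stdize_eq_map_rk, List.getElem_map]
    have e2 : (stdize F).getD i 0 = rk F (F[i]'(by omega)) := by
      rw [List.getD_eq_getElem _ _ (by omega : i < (stdize F).length)]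
      simp only [stdize_eq_map_rk, List.getElem_map]
    rw [e1, e2]
    have hR := List.isChain_iff_getElem.1 h i (by omega)
    rcases Nat.lt_trichotomy (F[i]'(by omega)) (F[i+1]'h2) with hlt | heq | hgt
    · obtain ⟨y, hyF, hy1, hy2⟩ := hR hlt
      have r1 : rk F (F[i]'(by omega)) < rk F y := rk_lt F hy1 hyF
      have r2 : rk F y < rk F (F[i+1]'h2) := rk_lt F hy2 (List.getElem_mem _)
      omega
    · rw [heq]; omega
    · have := rk_mono F (le_of_lt hgt)
      omega
  · rw [List.getD_eq_default _ _ (by omega : (stdize F).length ≤ i + 1)]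
    omega

lemma stdize_inj {l l' : List ℕ} (hnd : l.Nodup) (hnd' : l'.Nodup)
    (hT : l.toFinset = l'.toFinset) (hs : stdize l = stdize l') : l = l' := by
  have hperm : l.Perm l' := List.perm_of_nodup_nodup_toFinset_eq hnd hnd' hT
  have hrk : ∀ x, rk l' x = rk l x := by
    intro x
    unfold rk
    rw [← List.countP_eq_length_filter, ← List.countP_eq_length_filter, hperm.countP_eq]
  have hlen : l.length = l'.length := hperm.length_eq
  apply List.ext_getElem hlen
  intro i hi hi'
  have hsl : (stdize l).length = l.length := by rw [stdize_eq_map_rk, List.length_map]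
  have e : ∀ (m : List ℕ) (him : i < m.length), (stdize m).getD i 0 = rk m (m[i]'him) := by
    intro m him
    rw [List.getD_eq_getElem _ _ (by rw [stdize_eq_map_rk, List.length_map]; exact him)]
    simp only [stdize_eq_map_rk, List.getElem_map]
  have hse : rk l (l[i]'hi) = rk l' (l'[i]'hi') := by
    rw [← e l hi, ← e l' hi', hs]
  rw [hrk] at hse
  have hmem : l'[i]'hi' ∈ l := hperm.symm.subset (List.getElem_mem _)
  rcases Nat.lt_trichotomy (l[i]'hi) (l'[i]'hi') with hlt | heq | hgt
  · exact absurd hse (Nat.ne_of_lt (rk_lt l hlt hmem))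
  · exact heq
  · exact absurd hse.symm (Nat.ne_of_lt (rk_lt l hgt (List.getElem_mem _)))

/-- injectivity kernel -/
lemma inj2 : ∀ (l l' : List ℕ) (p : ℕ), (p :: l).Nodup → (p :: l').Nodup →
    rfA p l = rfA p l' → (nfA p l).toFinset = (nfA p l').toFinset → l = l' := by
  intro l
  induction l with
  | nil =>
    intro l' p _ hnd' hrf hnf
    cases l' with
    | nil => rfl
    | cons b' t' =>
      exfalso
      rw [rfA_cons] at hrf
      rw [nfA_cons] at hnf
      by_cases hb' : b' = p + 1
      · rw [if_pos hb'] at hnf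
        have : b' ∈ (nfA p ([] : List ℕ)).toFinset := by
          rw [hnf]; simp
        simp [nfA] at this
      · rw [if_neg hb'] at hrf
        simp [rfA] at hrf
  | cons b t ih =>
    intro l' p hnd hnd' hrf hnf
    cases l' with
    | nil =>
      exfalso
      rw [rfA_cons] at hrf
      rw [nfA_cons] at hnf
      by_cases hb : b = p + 1
      · rw [if_pos hb] at hnf
        have : b ∈ (nfA p ([] : List ℕ)).toFinset := by
          rw [← hnf]; simp
        simp [nfA] at this
      · rw [if_neg hb] at hrf
        simp [rfA] at hrf
    | cons b' t' =>
      have hpl : p ∉ b :: t := (List.nodup_cons.1 hnd).1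
      have hpl' : p ∉ b' :: t' := (List.nodup_cons.1 hnd').1
      have hndl : (b :: t).Nodup := (List.nodup_cons.1 hnd).2
      have hndl' : (b' :: t').Nodup := (List.nodup_cons.1 hnd').2
      rw [rfA_cons, rfA_cons] at hrf
      rw [nfA_cons, nfA_cons] at hnf
      by_cases hb : b = p + 1
      · rw [if_pos hb] at hnf
        have hb' : b' = p + 1 := by
          by_contra hb'
          rw [if_neg hb'] at hnf
          have hmem : p + 1 ∈ nfA b' t' := by
            have hx : p + 1 ∈ (b :: nfA b t).toFinset := by simp [← hb]
            rw [hnf] at hx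
            simpa using hx
          rcases nfA_mem_cases hmem with ⟨hh, he⟩ | ⟨x, hx, he⟩
          · have : p = b' := by omega
            exact hpl' (by rw [this]; exact List.mem_cons_self)
          · have : x = p := by omega
            rw [this] at hx
            exact hpl' (List.mem_cons_of_mem _ hx)
        rw [if_pos hb, if_pos hb'] at hrf
        rw [if_pos hb'] at hnf
        have hbb' : b = b' := by rw [hb, hb']
        subst hbb'
        have hbt : b ∉ t := (List.nodup_cons.1 hndl).1
        have hbt' : b ∉ t' := (List.nodup_cons.1 hndl').1
        have hnf2 : (nfA b t).toFinset = (nfA b t').toFinset := by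
          have h1 : b ∉ nfA b t := fun hc => hbt ((nfA_sublist b t).subset hc)
          have h2 : b ∉ nfA b t' := fun hc => hbt' ((nfA_sublist b t').subset hc)
          have := congrArg (fun s => Finset.erase s b) hnf
          simpa [List.toFinset_cons, Finset.erase_insert, h1, h2,
            List.mem_toFinset] using this
        exact congrArg (b :: ·) (ih t' b hndl hndl' hrf hnf2)
      · rw [if_neg hb] at hnf
        have hb' : ¬ (b' = p + 1) := by
          intro hb'
          rw [if_pos hb'] at hnf
          have hmem : p + 1 ∈ nfA b t := by
            have hx : p + 1 ∈ (nfA b t).toFinset := by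
              rw [hnf]; simp [← hb']
            simpa using hx
          rcases nfA_mem_cases hmem with ⟨hh, he⟩ | ⟨x, hx, he⟩
          · have : p = b := by omega
            exact hpl (by rw [this]; exact List.mem_cons_self)
          · have : x = p := by omega
            rw [this] at hx
            exact hpl (List.mem_cons_of_mem _ hx)
        rw [if_neg hb, if_neg hb'] at hrf
        rw [if_neg hb'] at hnf
        have hbb' : b = b' := (List.cons.injEq _ _ _ _ ▸ hrf).1
        subst hbb'
        have hrf2 : rfA b t = rfA b t' := (List.cons.injEq _ _ _ _ ▸ hrf).2
        exact congrArg (b :: ·) (ih t' b hndl hndl' hrf2 hnf)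

lemma runFN_perm (ρ : List ℕ) : (runFirsts ρ ++ runNonFirsts ρ).Perm ρ := by
  cases ρ with
  | nil => simp [runFirsts_nil, runNonFirsts_nil]
  | cons a l =>
    rw [runFirsts_cons, runNonFirsts_cons, List.cons_append]
    exact (rf_nf_perm a l).cons a

lemma runFirsts_sublist (ρ : List ℕ) : (runFirsts ρ).Sublist ρ := by
  cases ρ with
  | nil => simp [runFirsts_nil]
  | cons a l =>
    rw [runFirsts_cons]
    exact (rfA_sublist a l).cons₂ a

lemma runFirsts_toFinset {ρ : List ℕ} (hnd : ρ.Nodup) :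
    (runFirsts ρ).toFinset = ρ.toFinset \ (runNonFirsts ρ).toFinset := by
  have hperm := runFN_perm ρ
  have hndFN : (runFirsts ρ ++ runNonFirsts ρ).Nodup := hperm.nodup_iff.2 hnd
  obtain ⟨hndF, hndN, hdisj⟩ := List.nodup_append.1 hndFN
  ext x
  simp only [List.mem_toFinset, Finset.mem_sdiff]
  constructor
  · intro hx
    exact ⟨hperm.subset (List.mem_append_left _ hx), fun hn => hdisj x hx x hn rfl⟩
  · rintro ⟨hx, hn⟩
    rcases List.mem_append.1 (hperm.symm.subset hx) with h | h
    · exact h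
    · exact absurd h hn

end H18

open H18

/-- The map π ↦ (σ, A), sending a permutation π of {1,...,n} to the
standardization σ of the first elements of its maximal consecutive-ascending
runs together with the set A of all non-first elements of the runs, is
injective; moreover σ is 12-avoiding of some length m ≤ n with |A| = n - m,
and the number of occurrences of the Hertzsprung pattern 12 in π equals |A|. -/
theorem stmt_18 (n : ℕ) :
    (∀ π π' : List ℕ, π.Perm (List.range' 1 n) → π'.Perm (List.range' 1 n) →
      stdize (runFirsts π) = stdize (runFirsts π') →
      (runNonFirsts π).toFinset = (runNonFirsts π').toFinset → π = π') ∧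
    (∀ π : List ℕ, π.Perm (List.range' 1 n) →
      Avoids12 (stdize (runFirsts π)) ∧
      (stdize (runFirsts π)).length ≤ n ∧
      (stdize (runFirsts π)).length + (runNonFirsts π).length = n ∧
      (runNonFirsts π).length = occ12 π) := by
  constructor
  · -- injectivity
    intro π π' hπ hπ' hs hA
    have hp : π.Perm π' := hπ.trans hπ'.symm
    have hndπ : π.Nodup := hπ.nodup_iff.2 (List.nodup_range' (s := 1) (n := n))
    have hndπ' : π'.Nodup := hπ'.nodup_iff.2 (List.nodup_range' (s := 1) (n := n))
    have hTT : π.toFinset = π'.toFinset := by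
      ext x
      simp only [List.mem_toFinset]
      rw [hπ.mem_iff, ← hπ'.mem_iff]
    have hF : (runFirsts π).toFinset = (runFirsts π').toFinset := by
      rw [runFirsts_toFinset hndπ, runFirsts_toFinset hndπ', hTT, hA]
    have hFeq : runFirsts π = runFirsts π' :=
      stdize_inj (hndπ.sublist (runFirsts_sublist π))
        (hndπ'.sublist (runFirsts_sublist π')) hF hs
    cases π with
    | nil =>
      cases π' with
      | nil => rfl
      | cons a' l' => exact absurd hp.length_eq (by simp)
    | cons a l =>
      cases π' with
      | nil => exact absurd hp.length_eq (by simp)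
      | cons a' l' =>
        rw [runFirsts_cons, runFirsts_cons] at hFeq
        injection hFeq with haa hrfeq
        subst haa
        rw [runNonFirsts_cons, runNonFirsts_cons] at hA
        exact congrArg (a :: ·) (inj2 l l' a hndπ hndπ' hrfeq hA)
  · -- properties
    intro π hπ
    have hlen : π.length = n := by rw [hπ.length_eq, List.length_range']
    have hnd : π.Nodup := hπ.nodup_iff.2 (List.nodup_range' (s := 1) (n := n))
    cases π with
    | nil =>
      have hn0 : n = 0 := by simpa using hlen.symm
      refine ⟨?_, ?_, ?_, ?_⟩
      · intro i hi
        simp [stdize, runFirsts_nil] at hi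
      · simp [stdize, runFirsts_nil]
      · simp [stdize, runFirsts_nil, runNonFirsts_nil, hn0]
      · simp [runNonFirsts_nil, occ12_nil]
    | cons a l =>
      have hmem : ∀ x, x ∈ a :: l ↔ 1 ≤ x ∧ x < 1 + n := by
        intro x
        rw [hπ.mem_iff, List.mem_range'_1]
      have hndl : l.Nodup := (List.nodup_cons.1 hnd).2
      have hal : a ∉ l := (List.nodup_cons.1 hnd).1
      have Hkey : ∀ e b : ℕ, (e, b) ∈ (a :: l).zip l → e + 1 ≤ n → e + 1 ≠ b →
          (e + 1) ∈ runFirsts (a :: l) := by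
        intro e b hadj hle hne
        have hmem1 : e + 1 ∈ a :: l := (hmem (e+1)).2 ⟨by omega, by omega⟩
        rcases List.mem_append.1 ((runFN_perm (a :: l)).symm.subset hmem1) with h | h
        · exact h
        · exfalso
          rw [runNonFirsts_cons] at h
          obtain ⟨x, hx1, hx2⟩ := nfA_pairs h
          have hxe : x = e := by omega
          rw [hxe] at hx2
          exact hne (zip_tail_fun hnd hx2 hadj)
      have hchain := chain_lemma (· ∈ runFirsts (a :: l)) ((a :: l).zip l) n Hkey l a a
        (fun pr hpr => hpr)
        (fun x hx => by
          have := (hmem x).1 (List.mem_cons_of_mem _ hx); omega)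
        le_rfl hndl
        (fun v hv1 hv2 hvl => by
          have hv : v = a := le_antisymm hv2 hv1
          rw [hv] at hvl; exact hal hvl)
      have hlsum : (rfA a l).length + (nfA a l).length = l.length := by
        have := (rf_nf_perm a l).length_eq
        simpa [List.length_append] using this
      have hstl : (stdize (runFirsts (a :: l))).length = (rfA a l).length + 1 := by
        rw [stdize_eq_map_rk, List.length_map, runFirsts_cons, List.length_cons]
      have hln : l.length + 1 = n := by simpa using hlen
      refine ⟨?_, ?_, ?_, ?_⟩
      · apply avoids_of_chain
        rw [runFirsts_cons] at hchain ⊢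
        exact hchain
      · rw [hstl]; omega
      · rw [hstl, runNonFirsts_cons]; omega
      · rw [runNonFirsts_cons, occ12_cons]
end
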